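/- arXiv:2205.12127 — 2 statements merged into one kernel-verified Lean document; each statement's English description precedes it below -/
import Mathlib

section
/- Let 0 ≤ δ ≤ 1/2 and let ρ, σ be density matrices on ℂ^n with trace distance Δ(ρ,σ) ≥ 1 − 2δ. Then their fidelity satisfies F(ρ,σ) ≤ 2√(δ(1−δ)). -/
open Matrix Kronecker ComplexOrder

/-- The trace norm `‖A‖₁ = Tr √(Aᴴ A)` of a complex matrix. -/
noncomputable def traceNorm {n : Type*} [Fintype n] [DecidableEq n] (A : Matrix n n ℂ) : ℝ :=
  (((Matrix.posSemidef_conjTranspose_mul_self A).1.eigenvectorUnitary.1 *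
      diagonal (((↑) : ℝ → ℂ) ∘ (√·) ∘ (Matrix.posSemidef_conjTranspose_mul_self A).1.eigenvalues) *
      (star (Matrix.posSemidef_conjTranspose_mul_self A).1.eigenvectorUnitary : Matrix n n ℂ)).trace).re

/-- The trace distance `Δ(ρ,σ) = ‖ρ - σ‖₁ / 2`. -/
noncomputable def traceDist {n : Type*} [Fintype n] [DecidableEq n] (ρ σ : Matrix n n ℂ) : ℝ :=
  traceNorm (ρ - σ) / 2

open scoped Classical in
/-- Positive semidefinite square root (junk value `0` on non-PSD matrices). -/
noncomputable def psdSqrt {n : Type*} [Fintype n] [DecidableEq n] (A : Matrix n n ℂ) :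
    Matrix n n ℂ :=
  if h : A.PosSemidef then h.1.eigenvectorUnitary.1 * diagonal (((↑) : ℝ → ℂ) ∘ (√·) ∘ h.1.eigenvalues) *
    (star h.1.eigenvectorUnitary : Matrix n n ℂ) else 0

/-- The fidelity `F(ρ,σ) = ‖√ρ √σ‖₁`. -/
noncomputable def fidelity {n : Type*} [Fintype n] [DecidableEq n] (ρ σ : Matrix n n ℂ) : ℝ :=
  traceNorm (psdSqrt ρ * psdSqrt σ)

/-- A density matrix: positive semidefinite with trace 1. -/
def IsDensityMatrix {n : Type*} [Fintype n] [DecidableEq n] (ρ : Matrix n n ℂ) : Prop :=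
  ρ.PosSemidef ∧ ρ.trace = 1

/-- The projector `|b⟩⟨b|` on ℂ². -/
noncomputable def proj (b : Bool) : Matrix Bool Bool ℂ := Matrix.single b b 1

/-- The strong oblivious transfer channel `F_{(x₀,x₁)}`. -/
noncomputable def sotChannel (x₀ x₁ : Bool) (ρ : Matrix (Bool × Bool) (Bool × Bool) ℂ) :
    Matrix (Bool × Bool) (Bool × Bool) ℂ :=
  ∑ i : Bool, ∑ i' : Bool,
    ρ (i, i') (i, i') •
      (((1/2 : ℂ) • (1 : Matrix Bool Bool ℂ)) ⊗ₖ proj (xor (bif xor i i' then x₁ else x₀) i'))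


section SqrtHelpers
open MatrixOrder

noncomputable def Matrix.PosSemidef.sqrt {n : Type*} [Fintype n] [DecidableEq n] {A : Matrix n n ℂ}
    (h : A.PosSemidef) : Matrix n n ℂ :=
  h.1.eigenvectorUnitary.1 * diagonal (((↑) : ℝ → ℂ) ∘ (√·) ∘ h.1.eigenvalues) *
    (star h.1.eigenvectorUnitary : Matrix n n ℂ)

variable {n : Type*} [Fintype n] [DecidableEq n]

lemma traceNorm_eq (A : Matrix n n ℂ) :
    traceNorm A = ((Matrix.posSemidef_conjTranspose_mul_self A).sqrt.trace).re := rfl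

open scoped Classical in
lemma psdSqrt_eq (A : Matrix n n ℂ) :
    psdSqrt A = if h : A.PosSemidef then h.sqrt else 0 := rfl

lemma Matrix.PosSemidef.sqrt_eq_cfc {A : Matrix n n ℂ} (h : A.PosSemidef) :
    h.sqrt = CFC.sqrt A := by
  rw [CFC.sqrt_eq_real_sqrt A h.nonneg, cfcₙ_eq_cfc, h.1.cfc_eq]
  rfl

lemma Matrix.PosSemidef.sqrt_mul_self {A : Matrix n n ℂ} (h : A.PosSemidef) :
    h.sqrt * h.sqrt = A := by
  rw [h.sqrt_eq_cfc]
  exact CFC.sqrt_mul_sqrt_self A h.nonneg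

lemma Matrix.PosSemidef.posSemidef_sqrt {A : Matrix n n ℂ} (h : A.PosSemidef) :
    h.sqrt.PosSemidef := by
  rw [h.sqrt_eq_cfc]
  exact (CFC.sqrt_nonneg A).posSemidef

lemma Matrix.PosSemidef.eq_sqrt_of_sq_eq {A B : Matrix n n ℂ} (hA : A.PosSemidef)
    (hB : B.PosSemidef) (hAB : A ^ 2 = B) : A = hB.sqrt := by
  rw [hB.sqrt_eq_cfc]
  exact (CFC.sqrt_unique (by rw [← pow_two, hAB]) hA.nonneg).symm

end SqrtHelpers

section Helpers
open Matrix ComplexOrder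

lemma dot_cs {n : Type*} [Fintype n] (x y : n → ℂ) :
    ‖dotProduct (star x) y‖ ≤
      Real.sqrt (Complex.re (dotProduct (star x) x)) *
      Real.sqrt (Complex.re (dotProduct (star y) y)) := by
  let x' : EuclideanSpace ℂ n := (WithLp.equiv 2 _).symm x
  let y' : EuclideanSpace ℂ n := (WithLp.equiv 2 _).symm y
  have h1 : (inner ℂ x' y' : ℂ) = dotProduct (star x) y := by
    rw [dotProduct_comm]; rfl
  have h2 := norm_inner_le_norm (𝕜 := ℂ) x' y'
  rw [h1] at h2
  have hx : ‖x'‖ = Real.sqrt (Complex.re (dotProduct (star x) x)) := by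
    rw [← (show (inner ℂ x' x' : ℂ) = dotProduct (star x) x from by rw [dotProduct_comm]; rfl),
      show (inner ℂ x' x' : ℂ) = ((‖x'‖ : ℂ) ^ 2) from inner_self_eq_norm_sq_to_K x']
    rw [← Complex.ofReal_pow, Complex.ofReal_re, Real.sqrt_sq (norm_nonneg _)]
  have hy : ‖y'‖ = Real.sqrt (Complex.re (dotProduct (star y) y)) := by
    rw [← (show (inner ℂ y' y' : ℂ) = dotProduct (star y) y from by rw [dotProduct_comm]; rfl),
      show (inner ℂ y' y' : ℂ) = ((‖y'‖ : ℂ) ^ 2) from inner_self_eq_norm_sq_to_K y']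
    rw [← Complex.ofReal_pow, Complex.ofReal_re, Real.sqrt_sq (norm_nonneg _)]
  rw [← hx, ← hy]
  exact h2

variable {n : Type*} [Fintype n] [DecidableEq n]


lemma psd_trace_re_nonneg {M : Matrix n n ℂ} (hM : M.PosSemidef) : 0 ≤ M.trace.re := by
  rw [Matrix.trace, Complex.re_sum]
  refine Finset.sum_nonneg fun i _ => ?_
  have := hM.re_dotProduct_nonneg (Pi.single i 1)
  simpa [dotProduct, Matrix.mulVec, Pi.single_apply] using this

lemma trace_cs (B C : Matrix n n ℂ) :
    ‖(Bᴴ * C).trace‖ ≤ Real.sqrt ((Bᴴ * B).trace.re) * Real.sqrt ((Cᴴ * C).trace.re) := by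
  have key : ∀ X Y : Matrix n n ℂ, (Xᴴ * Y).trace =
      dotProduct (star (fun p : n × n => X p.1 p.2)) (fun p : n × n => Y p.1 p.2) := by
    intro X Y
    rw [Matrix.trace, dotProduct, Fintype.sum_prod_type]
    rw [Finset.sum_comm]
    refine Finset.sum_congr rfl fun i _ => ?_
    simp [Matrix.diag, Matrix.mul_apply, Matrix.conjTranspose_apply, mul_comm]
  rw [key B C, key B B, key C C]
  exact dot_cs _ _

lemma trace_mono {M N : Matrix n n ℂ} (hM : M.PosSemidef) (hN : (1 - N).PosSemidef) :
    (M * N).trace.re ≤ M.trace.re := by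
  have key : (M * (1 - N)).trace.re ≥ 0 := by
    have h1 : M * (1 - N) = hM.sqrt * (hM.sqrt * (1 - N)) := by
      rw [← mul_assoc, hM.sqrt_mul_self]
    rw [h1, Matrix.trace_mul_comm]
    have h2 : hM.sqrt * (1 - N) * hM.sqrt = hM.sqrt * (1 - N) * hM.sqrtᴴ := by
      rw [hM.posSemidef_sqrt.1.eq]
    rw [h2]
    exact psd_trace_re_nonneg (hN.mul_mul_conjTranspose_same hM.sqrt)
  have : (M * (1 - N)).trace = M.trace - (M * N).trace := by
    rw [mul_sub, mul_one, Matrix.trace_sub]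
  rw [this] at key
  simp only [Complex.sub_re] at key
  linarith

lemma dot_conj (M : Matrix n n ℂ) (v : n → ℂ) :
    dotProduct (star v) ((M * Mᴴ) *ᵥ v)
      = dotProduct (star (Mᴴ *ᵥ v)) (Mᴴ *ᵥ v) := by
  rw [← Matrix.mulVec_mulVec, dotProduct_mulVec,
    show star v ᵥ* M = star (Mᴴ *ᵥ v) from by
      rw [Matrix.star_mulVec, Matrix.conjTranspose_conjTranspose]]

lemma contraction_swap {W : Matrix n n ℂ} (hc : (1 - W * Wᴴ).PosSemidef) :
    (1 - Wᴴ * W).PosSemidef := by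
  refine Matrix.PosSemidef.of_dotProduct_mulVec_nonneg ?_ ?_
  · exact isHermitian_one.sub (Matrix.posSemidef_conjTranspose_mul_self W).1
  · intro x
    have hxx := dotProduct_star_self_nonneg x
    have e1 : dotProduct (star x) ((Wᴴ * W) *ᵥ x)
        = dotProduct (star (W *ᵥ x)) (W *ᵥ x) := by
      have := dot_conj Wᴴ x
      rwa [Matrix.conjTranspose_conjTranspose] at this
    have e2 : dotProduct (star x) ((Wᴴ * W) *ᵥ x)
        = dotProduct (star x) (Wᴴ *ᵥ (W *ᵥ x)) := by
      rw [← Matrix.mulVec_mulVec]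
    have hc2 := hc.dotProduct_mulVec_nonneg (W *ᵥ x)
    rw [Matrix.sub_mulVec, dotProduct_sub, Matrix.one_mulVec, sub_nonneg,
      dot_conj W (W *ᵥ x)] at hc2
    -- hc2 : ‖z‖² ≤ ‖y‖²  (as complex numbers) where z = Wᴴ *ᵥ (W *ᵥ x), y = W *ᵥ x
    have hyy := dotProduct_star_self_nonneg (W *ᵥ x)
    have hzz := dotProduct_star_self_nonneg (Wᴴ *ᵥ (W *ᵥ x))
    set c : ℝ := (dotProduct (star (W *ᵥ x)) (W *ᵥ x)).re with hcdef
    have hc0 : 0 ≤ c := by have := Complex.le_def.mp hyy; simpa using this.1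
    have hzc : (dotProduct (star (Wᴴ *ᵥ (W *ᵥ x))) (Wᴴ *ᵥ (W *ᵥ x))).re ≤ c := by
      have := Complex.le_def.mp hc2; simpa using this.1
    have hcs := dot_cs x (Wᴴ *ᵥ (W *ᵥ x))
    have h1 : c ≤ ‖dotProduct (star x) (Wᴴ *ᵥ (W *ᵥ x))‖ := by
      calc c = (dotProduct (star x) (Wᴴ *ᵥ (W *ᵥ x))).re := by
              rw [← e2, e1]
        _ ≤ _ := Complex.re_le_norm _
    have h3 : c ≤ Real.sqrt ((dotProduct (star x) x).re) * Real.sqrt c :=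
      h1.trans (hcs.trans (mul_le_mul_of_nonneg_left (Real.sqrt_le_sqrt hzc)
        (Real.sqrt_nonneg _)))
    have hxr : 0 ≤ (dotProduct (star x) x).re := by
      have := Complex.le_def.mp hxx; simpa using this.1
    have hfinal : c ≤ (dotProduct (star x) x).re := by
      nlinarith [Real.sq_sqrt hc0, Real.sq_sqrt hxr, Real.sqrt_nonneg c,
        Real.sqrt_nonneg ((dotProduct (star x) x).re),
        sq_nonneg (Real.sqrt ((dotProduct (star x) x).re) - Real.sqrt c)]
    rw [Matrix.sub_mulVec, dotProduct_sub, Matrix.one_mulVec, e1, Complex.le_def]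
    refine ⟨?_, ?_⟩
    · simp only [Complex.zero_re, Complex.sub_re]
      have : (dotProduct (star (W *ᵥ x)) (W *ᵥ x)).re = c := hcdef.symm
      rw [this]
      linarith
    · have him1 : (dotProduct (star x) x).im = 0 := by
        have := Complex.le_def.mp hxx; simpa using this.2.symm
      have him2 : (dotProduct (star (W *ᵥ x)) (W *ᵥ x)).im = 0 := by
        have := Complex.le_def.mp hyy; simpa using this.2.symm
      simp [him1, him2]

lemma trace_unitary_conj (V : Matrix.unitaryGroup n ℂ) (D : Matrix n n ℂ) :
    ((V : Matrix n n ℂ) * D * (V : Matrix n n ℂ)ᴴ).trace = D.trace := by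
  rw [Matrix.trace_mul_comm, ← mul_assoc, ← Matrix.star_eq_conjTranspose,
    Matrix.UnitaryGroup.star_mul_self, one_mul]

lemma unitary_conj_mul (V : Matrix.unitaryGroup n ℂ) (D E : Matrix n n ℂ) :
    ((V : Matrix n n ℂ) * D * (V : Matrix n n ℂ)ᴴ) * ((V : Matrix n n ℂ) * E * (V : Matrix n n ℂ)ᴴ)
      = (V : Matrix n n ℂ) * (D * E) * (V : Matrix n n ℂ)ᴴ := by
  have h : (V : Matrix n n ℂ)ᴴ * (V : Matrix n n ℂ) = 1 := by
    rw [← Matrix.star_eq_conjTranspose, Matrix.UnitaryGroup.star_mul_self]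
  have expand : (V : Matrix n n ℂ) * D * (V : Matrix n n ℂ)ᴴ * ((V : Matrix n n ℂ) * E * (V : Matrix n n ℂ)ᴴ)
      = (V : Matrix n n ℂ) * D * (((V : Matrix n n ℂ)ᴴ * (V : Matrix n n ℂ)) * E) * (V : Matrix n n ℂ)ᴴ := by
    simp only [mul_assoc]
  rw [expand, h, one_mul]
  simp only [mul_assoc]

lemma unitary_conj_sub (V : Matrix.unitaryGroup n ℂ) (D E : Matrix n n ℂ) :
    (V : Matrix n n ℂ) * D * (V : Matrix n n ℂ)ᴴ - (V : Matrix n n ℂ) * E * (V : Matrix n n ℂ)ᴴ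
      = (V : Matrix n n ℂ) * (D - E) * (V : Matrix n n ℂ)ᴴ := by
  rw [Matrix.mul_sub, Matrix.sub_mul]

lemma exists_projector {M : Matrix n n ℂ} (hM : M.IsHermitian) :
    ∃ P : Matrix n n ℂ, P.IsHermitian ∧ P.PosSemidef ∧ (1 - P).PosSemidef ∧ P * P = P ∧
      (P * M).trace.re = (traceNorm M + M.trace.re) / 2 := by
  set V := hM.eigenvectorUnitary with hV
  set e : n → ℝ := hM.eigenvalues with he
  have spec : M = (V : Matrix n n ℂ) * Matrix.diagonal (Complex.ofReal ∘ e)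
      * (V : Matrix n n ℂ)ᴴ := by
    have := hM.spectral_theorem
    rwa [Unitary.conjStarAlgAut_apply, Matrix.star_eq_conjTranspose] at this
  set f : n → ℂ := fun i => if 0 ≤ e i then (1:ℂ) else 0 with hf
  refine ⟨(V : Matrix n n ℂ) * Matrix.diagonal f * (V : Matrix n n ℂ)ᴴ, ?_, ?_, ?_, ?_, ?_⟩
  · -- Hermitian
    have : (Matrix.diagonal f)ᴴ = Matrix.diagonal f := by
      rw [Matrix.diagonal_conjTranspose]
      refine congrArg Matrix.diagonal ?_
      funext i
      by_cases h : 0 ≤ e i <;> simp [hf, h]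
    rw [Matrix.IsHermitian]
    simp only [Matrix.conjTranspose_mul, Matrix.conjTranspose_conjTranspose, this, mul_assoc]
  · -- PSD
    refine Matrix.PosSemidef.mul_mul_conjTranspose_same ?_ _
    refine Matrix.PosSemidef.diagonal fun i => ?_
    show (0:ℂ) ≤ if 0 ≤ e i then 1 else 0
    by_cases h : 0 ≤ e i
    · rw [if_pos h]; exact zero_le_one
    · rw [if_neg h]
  · -- 1 - P PSD
    have hone : (1 : Matrix n n ℂ) = (V : Matrix n n ℂ) * 1 * (V : Matrix n n ℂ)ᴴ := by
      rw [mul_one, ← Matrix.star_eq_conjTranspose, Matrix.mem_unitaryGroup_iff.mp V.2]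
    rw [hone, unitary_conj_sub, ← Matrix.diagonal_one, Matrix.diagonal_sub]
    refine Matrix.PosSemidef.mul_mul_conjTranspose_same ?_ _
    refine Matrix.PosSemidef.diagonal fun i => ?_
    show (0:ℂ) ≤ 1 - (if 0 ≤ e i then (1:ℂ) else 0)
    by_cases h : 0 ≤ e i
    · rw [if_pos h]; simp
    · rw [if_neg h]; simp
  · -- projector
    rw [unitary_conj_mul, Matrix.diagonal_mul_diagonal]
    refine congrArg (fun X => (V : Matrix n n ℂ) * X * (V : Matrix n n ℂ)ᴴ) ?_
    refine congrArg Matrix.diagonal ?_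
    funext i
    by_cases h : 0 ≤ e i <;> simp [hf, h]
  · -- trace formula
    conv_lhs => rw [spec]
    rw [unitary_conj_mul, Matrix.diagonal_mul_diagonal, trace_unitary_conj,
      Matrix.trace_diagonal]
    -- traceNorm M = ∑ |e i|
    have habs : traceNorm M = ∑ i, |e i| := by
      have hsq : Mᴴ * M = (V : Matrix n n ℂ) *
          Matrix.diagonal (fun i => ((e i : ℝ) : ℂ) * ((e i : ℝ) : ℂ)) * (V : Matrix n n ℂ)ᴴ := by
        rw [hM.eq]
        conv_lhs => rw [spec]
        rw [unitary_conj_mul, Matrix.diagonal_mul_diagonal]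
        rfl
      have hBpsd : ((V : Matrix n n ℂ) * Matrix.diagonal (fun i => ((|e i| : ℝ) : ℂ))
          * (V : Matrix n n ℂ)ᴴ).PosSemidef := by
        refine Matrix.PosSemidef.mul_mul_conjTranspose_same ?_ _
        refine Matrix.PosSemidef.diagonal fun i => ?_
        show (0:ℂ) ≤ ((|e i| : ℝ) : ℂ)
        rw [Complex.le_def]
        constructor
        · simp [abs_nonneg]
        · simp
      have hBsq : ((V : Matrix n n ℂ) * Matrix.diagonal (fun i => ((|e i| : ℝ) : ℂ))
          * (V : Matrix n n ℂ)ᴴ) ^ 2 = Mᴴ * M := by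
        rw [pow_two, unitary_conj_mul, Matrix.diagonal_mul_diagonal, hsq]
        refine congrArg (fun X => (V : Matrix n n ℂ) * X * (V : Matrix n n ℂ)ᴴ) ?_
        refine congrArg Matrix.diagonal ?_
        funext i
        rw [← Complex.ofReal_mul, ← Complex.ofReal_mul, abs_mul_abs_self]
      have := Matrix.PosSemidef.eq_sqrt_of_sq_eq hBpsd
        (Matrix.posSemidef_conjTranspose_mul_self M) hBsq
      rw [traceNorm_eq, ← this, trace_unitary_conj, Matrix.trace_diagonal]
      rw [show (∑ i, ((|e i| : ℝ) : ℂ)) = ((∑ i, |e i| : ℝ) : ℂ) from by push_cast; ring]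
      rw [Complex.ofReal_re]
    have htr : M.trace.re = ∑ i, e i := by
      conv_lhs => rw [spec]
      rw [trace_unitary_conj, Matrix.trace_diagonal]
      rw [show (∑ i, (Complex.ofReal ∘ e) i) = ((∑ i, e i : ℝ) : ℂ) from by simp]
      rw [Complex.ofReal_re]
    rw [habs, htr]
    rw [show (∑ i, f i * (Complex.ofReal ∘ e) i) = ((∑ i, if 0 ≤ e i then e i else 0 : ℝ) : ℂ)
      from by
        push_cast
        refine Finset.sum_congr rfl fun i _ => ?_
        by_cases h : 0 ≤ e i <;> simp [hf, h]]
    rw [Complex.ofReal_re, ← Finset.sum_add_distrib, Finset.sum_div]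
    refine Finset.sum_congr rfl fun i _ => ?_
    rcases le_or_gt 0 (e i) with h | h
    · rw [if_pos h, abs_of_nonneg h]; ring
    · rw [if_neg (not_le.mpr h), abs_of_neg h]; ring

lemma exists_contraction (A : Matrix n n ℂ) :
    ∃ W : Matrix n n ℂ, (1 - Wᴴ * W).PosSemidef ∧ (W * A).trace = (traceNorm A : ℂ) := by
  have hA := Matrix.posSemidef_conjTranspose_mul_self A
  set V : Matrix.unitaryGroup n ℂ := hA.1.eigenvectorUnitary with hV
  set d : n → ℝ := hA.1.eigenvalues with hd
  have hd0 : ∀ i, 0 ≤ d i := hA.eigenvalues_nonneg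
  have spec : Aᴴ * A = (V : Matrix n n ℂ) * Matrix.diagonal (Complex.ofReal ∘ d)
      * (V : Matrix n n ℂ)ᴴ := by
    have := hA.1.spectral_theorem
    rwa [Unitary.conjStarAlgAut_apply, Matrix.star_eq_conjTranspose] at this
  have key1 : ∀ x : ℝ, 0 ≤ x → (Real.sqrt x)⁻¹ * x = Real.sqrt x := by
    intro x hx
    rcases eq_or_lt_of_le hx with h | h
    · simp [← h]
    · have hs : Real.sqrt x > 0 := Real.sqrt_pos.mpr h
      field_simp
      exact (Real.sq_sqrt hx).symm
  set Dp : Matrix n n ℂ := Matrix.diagonal (fun i => ((Real.sqrt (d i))⁻¹ : ℂ)) with hDp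
  have f1 : Dp * Matrix.diagonal (Complex.ofReal ∘ d)
      = Matrix.diagonal (fun i => (Real.sqrt (d i) : ℂ)) := by
    rw [hDp, Matrix.diagonal_mul_diagonal]
    refine congrArg Matrix.diagonal ?_
    funext i
    show ((Real.sqrt (d i))⁻¹ : ℂ) * ((d i : ℝ) : ℂ) = _
    rw [← Complex.ofReal_inv, ← Complex.ofReal_mul, key1 (d i) (hd0 i)]
  have f2 : Dp * Matrix.diagonal (Complex.ofReal ∘ d) * Dp
      = Matrix.diagonal (fun i => if d i = 0 then (0:ℂ) else 1) := by
    rw [f1, hDp, Matrix.diagonal_mul_diagonal]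
    refine congrArg Matrix.diagonal ?_
    funext i
    show (Real.sqrt (d i) : ℂ) * ((Real.sqrt (d i))⁻¹ : ℂ) = _
    rw [← Complex.ofReal_inv, ← Complex.ofReal_mul]
    rcases eq_or_lt_of_le (hd0 i) with h | h
    · simp [← h]
    · have hs : Real.sqrt (d i) > 0 := Real.sqrt_pos.mpr h
      rw [mul_inv_cancel₀ (ne_of_gt hs), if_neg (ne_of_gt h)]
      simp
  refine ⟨(V : Matrix n n ℂ) * Dp * (V : Matrix n n ℂ)ᴴ * Aᴴ, ?_, ?_⟩
  · -- contraction
    apply contraction_swap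
    have hDph : Dpᴴ = Dp := by
      rw [hDp, Matrix.diagonal_conjTranspose]
      refine congrArg Matrix.diagonal ?_
      funext i
      simp [Pi.star_apply, Complex.star_def, Complex.conj_ofReal]
    have hWH : ((V : Matrix n n ℂ) * Dp * (V : Matrix n n ℂ)ᴴ * Aᴴ)ᴴ
        = A * ((V : Matrix n n ℂ) * Dp * (V : Matrix n n ℂ)ᴴ) := by
      simp only [Matrix.conjTranspose_mul, Matrix.conjTranspose_conjTranspose, hDph, mul_assoc]
    rw [hWH]
    have assoc1 : (V : Matrix n n ℂ) * Dp * (V : Matrix n n ℂ)ᴴ * Aᴴ *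
        (A * ((V : Matrix n n ℂ) * Dp * (V : Matrix n n ℂ)ᴴ))
        = ((V : Matrix n n ℂ) * Dp * (V : Matrix n n ℂ)ᴴ) * (Aᴴ * A) *
          ((V : Matrix n n ℂ) * Dp * (V : Matrix n n ℂ)ᴴ) := by
      simp only [mul_assoc]
    rw [assoc1, spec, unitary_conj_mul, unitary_conj_mul]
    have hone : (1 : Matrix n n ℂ) = (V : Matrix n n ℂ) * 1 * (V : Matrix n n ℂ)ᴴ := by
      rw [mul_one, ← Matrix.star_eq_conjTranspose, Matrix.mem_unitaryGroup_iff.mp V.2]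
    rw [hone, show (V : Matrix n n ℂ) * 1 * (V : Matrix n n ℂ)ᴴ -
        (V : Matrix n n ℂ) * (Dp * Matrix.diagonal (Complex.ofReal ∘ d) * Dp) * (V : Matrix n n ℂ)ᴴ
        = (V : Matrix n n ℂ) * (1 - Dp * Matrix.diagonal (Complex.ofReal ∘ d) * Dp) *
          (V : Matrix n n ℂ)ᴴ from by rw [Matrix.mul_sub, Matrix.sub_mul], f2]
    rw [show (1 : Matrix n n ℂ) - Matrix.diagonal (fun i => if d i = 0 then (0:ℂ) else 1)
        = Matrix.diagonal (fun i => if d i = 0 then (1:ℂ) else 0) from by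
      rw [← Matrix.diagonal_one, Matrix.diagonal_sub]
      refine congrArg Matrix.diagonal ?_
      funext i
      by_cases h : d i = 0 <;> simp [h]]
    refine Matrix.PosSemidef.mul_mul_conjTranspose_same ?_ _
    refine Matrix.PosSemidef.diagonal fun i => ?_
    show (0:ℂ) ≤ if d i = 0 then 1 else 0
    by_cases h : d i = 0
    · rw [if_pos h]; exact zero_le_one
    · rw [if_neg h]
  · -- trace
    rw [show (V : Matrix n n ℂ) * Dp * (V : Matrix n n ℂ)ᴴ * Aᴴ * A
        = (V : Matrix n n ℂ) * Dp * (V : Matrix n n ℂ)ᴴ * (Aᴴ * A) from by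
      simp only [mul_assoc], spec, show (V : Matrix n n ℂ) * Dp * (V : Matrix n n ℂ)ᴴ *
        ((V : Matrix n n ℂ) * Matrix.diagonal (Complex.ofReal ∘ d) * (V : Matrix n n ℂ)ᴴ)
        = (V : Matrix n n ℂ) * (Dp * Matrix.diagonal (Complex.ofReal ∘ d)) * (V : Matrix n n ℂ)ᴴ
        from unitary_conj_mul V Dp _, f1, trace_unitary_conj, Matrix.trace_diagonal]
    have sqrt_eq : hA.sqrt = (V : Matrix n n ℂ) *
        Matrix.diagonal (fun i => (Real.sqrt (d i) : ℂ)) * (V : Matrix n n ℂ)ᴴ := rfl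
    rw [traceNorm_eq, sqrt_eq, trace_unitary_conj, Matrix.trace_diagonal]
    rw [show (∑ i, ((Real.sqrt (d i) : ℝ) : ℂ)) = ((∑ i, Real.sqrt (d i) : ℝ) : ℂ) from by
      push_cast; ring]
    rw [Complex.ofReal_re]


lemma final_arith {p q δ : ℝ} (hp0 : 0 ≤ p) (hp1 : p ≤ 1) (hq0 : 0 ≤ q) (hq1 : q ≤ 1)
    (hδ0 : 0 ≤ δ) (hδ1 : δ ≤ 1/2) (ht : 1 - 2*δ ≤ p - q) :
    Real.sqrt p * Real.sqrt q + Real.sqrt (1-p) * Real.sqrt (1-q)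
      ≤ 2 * Real.sqrt (δ*(1-δ)) := by
  have ha : (Real.sqrt p)^2 = p := Real.sq_sqrt hp0
  have hb : (Real.sqrt q)^2 = q := Real.sq_sqrt hq0
  have hc : (Real.sqrt (1-p))^2 = 1-p := Real.sq_sqrt (by linarith)
  have hd : (Real.sqrt (1-q))^2 = 1-q := Real.sq_sqrt (by linarith)
  have hg : (Real.sqrt (δ*(1-δ)))^2 = δ*(1-δ) := Real.sq_sqrt (by nlinarith)
  have ha0 := Real.sqrt_nonneg p
  have hb0 := Real.sqrt_nonneg q
  have hc0 := Real.sqrt_nonneg (1-p)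
  have hd0 := Real.sqrt_nonneg (1-q)
  have hg0 := Real.sqrt_nonneg (δ*(1-δ))
  have hX0 : 0 ≤ Real.sqrt p * Real.sqrt q + Real.sqrt (1-p) * Real.sqrt (1-q) := by positivity
  have h1 : (Real.sqrt p * Real.sqrt q + Real.sqrt (1-p) * Real.sqrt (1-q))^2
      ≤ (2 * Real.sqrt (δ*(1-δ)))^2 := by
    nlinarith [sq_nonneg (Real.sqrt p * Real.sqrt (1-p) - Real.sqrt q * Real.sqrt (1-q)),
      sq_nonneg (Real.sqrt p * Real.sqrt (1-q) - Real.sqrt q * Real.sqrt (1-p)),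
      mul_nonneg (sub_nonneg.2 ht) (show (0:ℝ) ≤ p - q + (1 - 2*δ) by linarith)]
  exact (pow_le_pow_iff_left₀ hX0 (by positivity) two_ne_zero).mp h1

end Helpers

/-- If `Δ(ρ,σ) ≥ 1 - 2δ` then `F(ρ,σ) ≤ 2√(δ(1-δ))`. -/
theorem stmt_1 {n : ℕ} (δ : ℝ) (hδ0 : 0 ≤ δ) (hδ1 : δ ≤ 1/2)
    (ρ σ : Matrix (Fin n) (Fin n) ℂ)
    (hρ : IsDensityMatrix ρ) (hσ : IsDensityMatrix σ)
    (h : traceDist ρ σ ≥ 1 - 2 * δ) :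
    fidelity ρ σ ≤ 2 * Real.sqrt (δ * (1 - δ)) := by
  obtain ⟨hρp, hρt⟩ := hρ
  obtain ⟨hσp, hσt⟩ := hσ
  set R := hρp.sqrt with hR
  set S := hσp.sqrt with hS
  have hRh : Rᴴ = R := hρp.posSemidef_sqrt.1.eq
  have hSh : Sᴴ = S := hσp.posSemidef_sqrt.1.eq
  have hRR : R * R = ρ := hρp.sqrt_mul_self
  have hSS : S * S = σ := hσp.sqrt_mul_self
  have hfid : fidelity ρ σ = traceNorm (R * S) := by
    rw [fidelity, psdSqrt_eq, psdSqrt_eq, dif_pos hρp, dif_pos hσp]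
  obtain ⟨W, hWc, hWt⟩ := exists_contraction (R * S)
  obtain ⟨P, hPh, hPp, hP1, hPP, hPt⟩ := exists_projector (hρp.1.sub hσp.1)
  -- trace of ρ - σ is zero
  have hts : (ρ - σ).trace = 0 := by rw [Matrix.trace_sub, hρt, hσt, sub_self]
  have htsre : (ρ - σ).trace.re = 0 := by rw [hts]; simp
  rw [htsre, add_zero] at hPt
  -- p and q
  set p : ℝ := (P * ρ).trace.re with hp
  set q : ℝ := (P * σ).trace.re with hq
  have hsplit : (P * (ρ - σ)).trace.re = p - q := by
    rw [Matrix.mul_sub, Matrix.trace_sub]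
    simp [hp, hq]
  have hpq : p - q = traceNorm (ρ - σ) / 2 := by rw [← hsplit, hPt]
  have hdist : 1 - 2 * δ ≤ p - q := by
    rw [hpq]
    exact h
  -- bounds on p, q
  have hρtre : ρ.trace.re = 1 := by rw [hρt]; simp
  have hσtre : σ.trace.re = 1 := by rw [hσt]; simp
  have tr_nonneg : ∀ (Q M : Matrix (Fin n) (Fin n) ℂ) (hQ : Q.PosSemidef)
      (hM : M.PosSemidef) (T : Matrix (Fin n) (Fin n) ℂ) (hT : Tᴴ = T) (hTT : T * T = M),
      0 ≤ (Q * M).trace.re := by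
    intro Q M hQ hM T hT hTT
    have e1 : (Q * M).trace = (T * Q * T).trace := by
      rw [← hTT, Matrix.trace_mul_comm Q (T*T)]
      exact (Matrix.trace_mul_cycle T Q T).symm
    rw [e1]
    have : (T * Q * T).PosSemidef := by
      have := hQ.mul_mul_conjTranspose_same T
      rwa [hT] at this
    exact psd_trace_re_nonneg this
  have tr_le : ∀ (Q M : Matrix (Fin n) (Fin n) ℂ) (hM : M.PosSemidef)
      (hQ1 : (1 - Q).PosSemidef), (Q * M).trace.re ≤ M.trace.re := by
    intro Q M hM hQ1
    rw [Matrix.trace_mul_comm]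
    exact trace_mono hM hQ1
  have hp0 : 0 ≤ p := tr_nonneg P ρ hPp hρp R hRh hRR
  have hq0 : 0 ≤ q := tr_nonneg P σ hPp hσp S hSh hSS
  have hp1 : p ≤ 1 := by
    have := tr_le P ρ hρp hP1
    rwa [hρtre] at this
  have hq1 : q ≤ 1 := by
    have := tr_le P σ hσp hP1
    rwa [hσtre] at this
  -- key bound for a projector Q
  have key : ∀ (Q : Matrix (Fin n) (Fin n) ℂ), Qᴴ = Q → Q * Q = Q → Q.PosSemidef →
      0 ≤ (Q * ρ).trace.re → 0 ≤ (Q * σ).trace.re →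
      (W * R * Q * S).trace.re
        ≤ Real.sqrt ((Q * ρ).trace.re) * Real.sqrt ((Q * σ).trace.re) := by
    intro Q hQh hQQ hQp hQρ0 hQσ0
    have h1 : (Q * R * Wᴴ)ᴴ * (Q * S) = W * R * Q * S := by
      rw [Matrix.conjTranspose_mul, Matrix.conjTranspose_mul,
        Matrix.conjTranspose_conjTranspose, hRh, hQh]
      simp only [mul_assoc]
      rw [← Matrix.mul_assoc Q Q S, hQQ]
    have h2 := trace_cs (Q * R * Wᴴ) (Q * S)
    rw [h1] at h2
    -- first factor trace
    have e1 : ((Q * R * Wᴴ)ᴴ * (Q * R * Wᴴ)).trace = ((R * Q * R) * (Wᴴ * W)).trace := by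
      have hm : (Q * R * Wᴴ)ᴴ * (Q * R * Wᴴ) = W * (R * Q * R) * Wᴴ := by
        rw [Matrix.conjTranspose_mul, Matrix.conjTranspose_mul,
          Matrix.conjTranspose_conjTranspose, hRh, hQh]
        simp only [mul_assoc]
        rw [← Matrix.mul_assoc Q Q, hQQ]
      rw [hm, Matrix.trace_mul_cycle, Matrix.trace_mul_comm]
    have e1' : ((Q * R * Wᴴ)ᴴ * (Q * R * Wᴴ)).trace.re ≤ (Q * ρ).trace.re := by
      rw [e1]
      have hRQR : (R * Q * R).PosSemidef := by
        have := hQp.mul_mul_conjTranspose_same R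
        rwa [hRh] at this
      have step := trace_mono hRQR hWc
      refine step.trans (le_of_eq ?_)
      have etr : (R * Q * R).trace = (Q * ρ).trace := by
        rw [Matrix.trace_mul_cycle R Q R, hRR, Matrix.trace_mul_comm ρ Q]
      exact congrArg Complex.re etr
    -- second factor trace
    have e2 : ((Q * S)ᴴ * (Q * S)).trace = (Q * σ).trace := by
      have hm : (Q * S)ᴴ * (Q * S) = S * Q * S := by
        rw [Matrix.conjTranspose_mul, hSh, hQh]
        simp only [mul_assoc]
        rw [← Matrix.mul_assoc Q Q S, hQQ]
      rw [hm, Matrix.trace_mul_cycle S Q S, hSS, Matrix.trace_mul_comm σ Q]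
    calc (W * R * Q * S).trace.re ≤ ‖(W * R * Q * S).trace‖ := Complex.re_le_norm _
      _ ≤ Real.sqrt (((Q * R * Wᴴ)ᴴ * (Q * R * Wᴴ)).trace.re) *
          Real.sqrt (((Q * S)ᴴ * (Q * S)).trace.re) := h2
      _ ≤ Real.sqrt ((Q * ρ).trace.re) * Real.sqrt ((Q * σ).trace.re) := by
          apply mul_le_mul
          · exact Real.sqrt_le_sqrt e1'
          · rw [e2]
          · exact Real.sqrt_nonneg _
          · exact Real.sqrt_nonneg _
  -- apply to P and 1 - P
  have hQh' : (1 - P)ᴴ = 1 - P := by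
    rw [Matrix.conjTranspose_sub, Matrix.conjTranspose_one, hPh.eq]
  have hQQ' : (1 - P) * (1 - P) = 1 - P := by
    rw [Matrix.mul_sub, Matrix.sub_mul, Matrix.sub_mul, hPP]
    simp only [mul_one, one_mul]
    abel
  have h1P : (1 - (1 - P)).PosSemidef := by
    simpa using hPp
  have bound1 := key P hPh.eq hPP hPp (by rw [← hp]; exact hp0) (by rw [← hq]; exact hq0)
  have cρ : ((1 - P) * ρ).trace.re = 1 - p := by
    rw [Matrix.sub_mul, Matrix.one_mul, Matrix.trace_sub]
    simp [hρtre, hp]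
  have cσ : ((1 - P) * σ).trace.re = 1 - q := by
    rw [Matrix.sub_mul, Matrix.one_mul, Matrix.trace_sub]
    simp [hσtre, hq]
  have bound2 := key (1 - P) hQh' hQQ' hP1
    (by rw [cρ]; linarith) (by rw [cσ]; linarith)
  rw [cρ, cσ] at bound2
  -- split the fidelity
  have hsplit2 : W * (R * S) = W * R * P * S + W * R * (1 - P) * S := by
    have e : W * R * (1 - P) * S = W * R * S - W * R * P * S := by
      rw [Matrix.mul_sub, Matrix.mul_one, Matrix.sub_mul]
    rw [e, ← Matrix.mul_assoc]
    abel
  have hF : fidelity ρ σ = (W * R * P * S).trace.re + (W * R * (1 - P) * S).trace.re := by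
    rw [hfid, show traceNorm (R * S) = ((traceNorm (R * S) : ℝ) : ℂ).re from
      (Complex.ofReal_re _).symm, ← hWt, hsplit2, Matrix.trace_add, Complex.add_re]
  rw [hF]
  calc (W * R * P * S).trace.re + (W * R * (1 - P) * S).trace.re
      ≤ Real.sqrt p * Real.sqrt q + Real.sqrt (1-p) * Real.sqrt (1-q) := by
        have b1 : (W * R * P * S).trace.re ≤ Real.sqrt p * Real.sqrt q := bound1
        exact add_le_add b1 bound2
    _ ≤ 2 * Real.sqrt (δ * (1 - δ)) :=
        final_arith hp0 hp1 hq0 hq1 hδ0 hδ1 hdist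
end

section
/- Let p_{(i,i')} ≥ 0 for (i,i') ∈ {0,1}² with Σ_{(i,i')} p_{(i,i')} = 1, let κ_{(i,i')} be density matrices on ℂ^m, and for each (x₀,x₁) ∈ {0,1}² define the density matrix ρ_{(x₀,x₁)} = Σ_{(i,i')∈{0,1}²} p_{(i,i')}·(I₂/2) ⊗ |x_{i⊕i'} ⊕ i'⟩⟨x_{i⊕i'} ⊕ i'| ⊗ κ_{(i,i')} on ℂ²⊗ℂ²⊗ℂ^m. Let ε ≥ 0 and let ω_{(x₀,x₁)} be density matrices on the same space with Δ(ω_{(x₀,x₁)}, ρ_{(x₀,x₁)}) ≤ ε for every (x₀,x₁). Then for every POVM (M_{(x₀,x₁)})_{(x₀,x₁)∈{0,1}²}: (1/4)·Σ_{(x₀,x₁)∈{0,1}²} Tr(M_{(x₀,x₁)} ω_{(x₀,x₁)}) ≤ 1/2 + ε. -/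
open Matrix Kronecker ComplexOrder

section AuxLemmas

open Matrix Kronecker ComplexOrder

variable {n : Type*} [Fintype n] [DecidableEq n]

lemma trace_psd_nonneg {A : Matrix n n ℂ} (hA : A.PosSemidef) : 0 ≤ A.trace := by
  rw [Matrix.trace]
  apply Finset.sum_nonneg
  intro i _
  exact hA.diag_nonneg

open scoped MatrixOrder in
lemma trace_mul_psd_nonneg {A B : Matrix n n ℂ} (hA : A.PosSemidef) (hB : B.PosSemidef) :
    0 ≤ (A * B).trace := by
  have h1 : A * B = CFC.sqrt A * (CFC.sqrt A * B) := by
    rw [← mul_assoc, CFC.sqrt_mul_sqrt_self A hA.nonneg]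
  rw [h1, Matrix.trace_mul_comm]
  have h2 : CFC.sqrt A * B * CFC.sqrt A = CFC.sqrt A * B * (CFC.sqrt A)ᴴ := by
    rw [(CFC.sqrt_nonneg A).posSemidef.1.eq]
  have := hB.mul_mul_conjTranspose_same (CFC.sqrt A)
  rw [← h2] at this
  exact trace_psd_nonneg this

lemma herm_decomp {Δ : Matrix n n ℂ} (h : Δ.IsHermitian) :
    ∃ P N : Matrix n n ℂ, P.PosSemidef ∧ N.PosSemidef ∧ Δ = P - N ∧
      traceNorm Δ = ((P + N).trace).re := by
  set U : Matrix n n ℂ := (h.eigenvectorUnitary : Matrix n n ℂ) with hU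
  set lam := h.eigenvalues with hlam
  set P : Matrix n n ℂ := U * diagonal (fun i => ((max (lam i) 0 : ℝ) : ℂ)) * Uᴴ with hP
  set N : Matrix n n ℂ := U * diagonal (fun i => ((max (-(lam i)) 0 : ℝ) : ℂ)) * Uᴴ with hN
  have hdiagP : (diagonal (fun i => ((max (lam i) 0 : ℝ) : ℂ))).PosSemidef := by
    refine posSemidef_diagonal_iff.mpr fun i => ?_
    rw [Complex.zero_le_real]
    exact le_max_right _ _
  have hdiagN : (diagonal (fun i => ((max (-(lam i)) 0 : ℝ) : ℂ))).PosSemidef := by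
    refine posSemidef_diagonal_iff.mpr fun i => ?_
    rw [Complex.zero_le_real]
    exact le_max_right _ _
  have hPpsd : P.PosSemidef := hdiagP.mul_mul_conjTranspose_same U
  have hNpsd : N.PosSemidef := hdiagN.mul_mul_conjTranspose_same U
  have hUU : Uᴴ * U = 1 := by
    have := (Matrix.mem_unitaryGroup_iff').mp h.eigenvectorUnitary.2
    simpa [star_eq_conjTranspose] using this
  have hspec : Δ = U * diagonal (fun i => ((lam i : ℝ) : ℂ)) * Uᴴ := by
    have := h.spectral_theorem
    simp only [Unitary.conjStarAlgAut_apply, Unitary.coe_star, star_eq_conjTranspose] at this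
    exact this
  have hsub : Δ = P - N := by
    have e1 : (fun i => ((lam i : ℝ) : ℂ)) =
        fun i => ((max (lam i) 0 : ℝ) : ℂ) - ((max (-(lam i)) 0 : ℝ) : ℂ) := by
      funext i
      rw [← Complex.ofReal_sub]
      congr 1
      rcases le_total (lam i) 0 with hl | hl
      · simp [max_eq_right hl, max_eq_left (neg_nonneg.mpr hl)]
      · simp [max_eq_left hl, max_eq_right (neg_nonpos.mpr hl)]
    rw [hspec, hP, hN, ← Matrix.sub_mul, ← Matrix.mul_sub, diagonal_sub, e1]
  refine ⟨P, N, hPpsd, hNpsd, hsub, ?_⟩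
  have hPN : P + N = U * diagonal (fun i => ((|lam i| : ℝ) : ℂ)) * Uᴴ := by
    have e2 : (fun i => ((max (lam i) 0 : ℝ) : ℂ) + ((max (-(lam i)) 0 : ℝ) : ℂ)) =
        fun i => ((|lam i| : ℝ) : ℂ) := by
      funext i
      rw [← Complex.ofReal_add]
      congr 1
      exact max_zero_add_max_neg_zero_eq_abs_self (lam i)
    rw [hP, hN, ← Matrix.add_mul, ← Matrix.mul_add, diagonal_add, e2]
  have hPNpsd : (P + N).PosSemidef := by
    rw [hPN]
    refine (posSemidef_diagonal_iff.mpr fun i => ?_).mul_mul_conjTranspose_same U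
    rw [Complex.zero_le_real]
    exact abs_nonneg _
  have conjmul : ∀ A B : Matrix n n ℂ, (U * A * Uᴴ) * (U * B * Uᴴ) = U * (A * B) * Uᴴ := by
    intro A B
    simp only [Matrix.mul_assoc]
    rw [← Matrix.mul_assoc Uᴴ U (B * Uᴴ), hUU, Matrix.one_mul]
  have hsq : (P + N) ^ 2 = Δᴴ * Δ := by
    have e3 : (fun i => ((|lam i| : ℝ) : ℂ) * ((|lam i| : ℝ) : ℂ)) =
        fun i => ((lam i : ℝ) : ℂ) * ((lam i : ℝ) : ℂ) := by
      funext i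
      rw [← Complex.ofReal_mul, ← Complex.ofReal_mul]
      congr 1
      rw [← sq, ← sq, sq_abs]
    rw [h.eq, hPN, pow_two, hspec, conjmul, conjmul, diagonal_mul_diagonal,
      diagonal_mul_diagonal, e3]
  have hΔΔ := Matrix.posSemidef_conjTranspose_mul_self Δ
  have e : traceNorm Δ = ((cfc Real.sqrt (Δᴴ * Δ)).trace).re := by
    rw [hΔΔ.1.cfc_eq Real.sqrt]; rfl
  have hid : cfc (fun x : ℝ => √(x ^ 2)) (P + N) = P + N := by
    rw [cfc_congr (g := fun x : ℝ => x) ?_]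
    · exact cfc_id ℝ (P + N) hPNpsd.1.isSelfAdjoint
    · intro x hx
      rw [hPNpsd.1.spectrum_real_eq_range_eigenvalues] at hx
      obtain ⟨i, rfl⟩ := hx
      exact Real.sqrt_sq (hPNpsd.eigenvalues_nonneg i)
  rw [e, ← hsq, ← cfc_comp_pow Real.sqrt 2 (P + N) (ha := hPNpsd.1.isSelfAdjoint), hid]

lemma trace_mul_le_of_dist {M ω ρ : Matrix n n ℂ} (hM : M.PosSemidef)
    (hM1 : (1 - M).PosSemidef) (hω : ω.PosSemidef) (hρ : ρ.PosSemidef)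
    (htr : ω.trace = ρ.trace) :
    ((M * ω).trace).re ≤ ((M * ρ).trace).re + traceDist ω ρ := by
  obtain ⟨P, N, hP, hN, hsub, hTN⟩ := herm_decomp (Matrix.IsHermitian.sub hω.1 hρ.1)
  have hΔtr : (ω - ρ).trace = 0 := by rw [Matrix.trace_sub, htr, sub_self]
  have htrPN : P.trace = N.trace := by
    have := hΔtr
    rw [hsub, Matrix.trace_sub, sub_eq_zero] at this
    exact this
  have hdist : traceDist ω ρ = (P.trace).re := by
    rw [traceDist, hTN, Matrix.trace_add, Complex.add_re, htrPN]
    ring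
  have h1 : 0 ≤ ((M * N).trace).re := (Complex.le_def.mp (trace_mul_psd_nonneg hM hN)).1
  have h2 : ((M * P).trace).re ≤ (P.trace).re := by
    have h3 : 0 ≤ (((1 - M) * P).trace).re :=
      (Complex.le_def.mp (trace_mul_psd_nonneg hM1 hP)).1
    have h4 : ((1 - M) * P).trace = P.trace - (M * P).trace := by
      rw [Matrix.sub_mul, Matrix.one_mul, Matrix.trace_sub]
    rw [h4, Complex.sub_re] at h3
    linarith
  have h5 : (M * ω).trace = (M * ρ).trace + (M * P).trace - (M * N).trace := by
    have : ω = ρ + P - N := by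
      have := hsub
      rw [sub_eq_iff_eq_add] at this
      rw [this]; abel
    rw [this]
    rw [Matrix.mul_sub, Matrix.mul_add, Matrix.trace_sub, Matrix.trace_add]
  rw [h5, hdist]
  simp only [Complex.sub_re, Complex.add_re]
  linarith

lemma kronecker_conjTranspose {l : Type*} {n : Type*}
    (X : Matrix l l ℂ) (Y : Matrix n n ℂ) : (X ⊗ₖ Y)ᴴ = Xᴴ ⊗ₖ Yᴴ := by
  ext ⟨i, j⟩ ⟨k, r⟩
  simp [Matrix.conjTranspose_apply, Matrix.kroneckerMap_apply]

lemma kronecker_posSemidef {l : Type*} [Fintype l] [DecidableEq l]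
    {A : Matrix l l ℂ} {B : Matrix n n ℂ} (hA : A.PosSemidef) (hB : B.PosSemidef) :
    (A ⊗ₖ B).PosSemidef := by
  exact hA.kronecker hB

lemma real_smul_posSemidef {c : ℝ} (hc : 0 ≤ c) {M : Matrix n n ℂ} (hM : M.PosSemidef) :
    (c • M).PosSemidef := by
  have hcoe : c • M = (c : ℂ) • M := by
    ext i j
    simp [Complex.real_smul]
  rw [hcoe]
  refine ⟨?_, ?_⟩
  · have : ((c : ℂ) • M)ᴴ = star (c : ℂ) • Mᴴ := Matrix.conjTranspose_smul _ _
    rw [Matrix.IsHermitian, this, hM.1.eq, Complex.star_def, Complex.conj_ofReal]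
  · exact (hM.smul (Complex.zero_le_real.mpr hc)).2

lemma sum_posSemidef {ι : Type*} (s : Finset ι) (f : ι → Matrix n n ℂ)
    (h : ∀ i ∈ s, (f i).PosSemidef) : (∑ i ∈ s, f i).PosSemidef :=
  Finset.sum_induction f _ (fun _ _ ha hb => ha.add hb) Matrix.PosSemidef.zero h

lemma proj_posSemidef (b : Bool) : (proj b).PosSemidef := by
  have h1 : (proj b)ᴴ = proj b := by
    ext i j
    simp only [proj, Matrix.conjTranspose_apply, Matrix.single, Matrix.of_apply]
    rw [apply_ite star]
    simp [and_comm]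
  have h2 : proj b * proj b = proj b := by
    simp [proj, Matrix.single_mul_single_same]
  have := Matrix.posSemidef_conjTranspose_mul_self (proj b)
  rwa [h1, h2] at this

lemma proj_trace (b : Bool) : (proj b).trace = 1 := by
  cases b <;> simp [proj, Matrix.trace, Matrix.diag, Matrix.single]

lemma proj_add_not (b : Bool) : proj b + proj (!b) = 1 := by
  ext i j
  cases b <;> cases i <;> cases j <;>
    simp [proj, Matrix.single, Matrix.one_apply]

lemma half_one_posSemidef : ((1/2 : ℂ) • (1 : Matrix Bool Bool ℂ)).PosSemidef := by
  have : ((1/2 : ℂ) • (1 : Matrix Bool Bool ℂ)) = ((1/2 : ℝ) • (1 : Matrix Bool Bool ℂ)) := by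
    ext i j
    simp [Complex.real_smul]
  rw [this]
  exact real_smul_posSemidef (by norm_num) Matrix.PosSemidef.one

end AuxLemmas

/-- No POVM can identify `(x₀,x₁)` from states `ε`-close to the ideal-protocol
output states with average success probability exceeding `1/2 + ε`. -/
theorem stmt_13 {m : ℕ} (ε : ℝ) (hε : 0 ≤ ε)
    (p : Bool × Bool → ℝ) (hp : ∀ a, 0 ≤ p a) (hpsum : ∑ a : Bool × Bool, p a = 1)
    (κ : Bool × Bool → Matrix (Fin m) (Fin m) ℂ) (hκ : ∀ a, IsDensityMatrix (κ a))
    (ω : Bool × Bool → Matrix ((Bool × Bool) × Fin m) ((Bool × Bool) × Fin m) ℂ)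
    (hω : ∀ x, IsDensityMatrix (ω x))
    (hclose : ∀ x : Bool × Bool,
      traceDist (ω x)
        (∑ a : Bool × Bool, p a •
          ((((1/2 : ℂ) • (1 : Matrix Bool Bool ℂ)) ⊗ₖ
              proj (xor (bif xor a.1 a.2 then x.2 else x.1) a.2)) ⊗ₖ κ a)) ≤ ε)
    (M : Bool × Bool → Matrix ((Bool × Bool) × Fin m) ((Bool × Bool) × Fin m) ℂ)
    (hM : ∀ x, (M x).PosSemidef) (hMsum : ∑ x : Bool × Bool, M x = 1) :
    (1/4 : ℝ) * ∑ x : Bool × Bool, ((M x * ω x).trace).re ≤ 1/2 + ε := by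
  classical
  set ρf : Bool × Bool → Matrix ((Bool × Bool) × Fin m) ((Bool × Bool) × Fin m) ℂ :=
    fun x => ∑ a : Bool × Bool, p a •
      ((((1/2 : ℂ) • (1 : Matrix Bool Bool ℂ)) ⊗ₖ
          proj (xor (bif xor a.1 a.2 then x.2 else x.1) a.2)) ⊗ₖ κ a) with hρf
  set σ : Matrix ((Bool × Bool) × Fin m) ((Bool × Bool) × Fin m) ℂ :=
    ∑ a : Bool × Bool, p a •
      ((((1/2 : ℂ) • (1 : Matrix Bool Bool ℂ)) ⊗ₖ (1 : Matrix Bool Bool ℂ)) ⊗ₖ κ a) with hσ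
  have hρfpsd : ∀ x, (ρf x).PosSemidef := fun x =>
    sum_posSemidef _ _ fun a _ => real_smul_posSemidef (hp a)
      (kronecker_posSemidef (kronecker_posSemidef half_one_posSemidef (proj_posSemidef _))
        (hκ a).1)
  have hhalftr : ((1/2 : ℂ) • (1 : Matrix Bool Bool ℂ)).trace = 1 := by
    rw [Matrix.trace_smul, Matrix.trace_one]
    simp
  have hρftr : ∀ x, (ρf x).trace = 1 := by
    intro x
    rw [hρf]
    simp only
    rw [Matrix.trace_sum]
    have he : ∀ a ∈ Finset.univ, (p a •
        ((((1/2 : ℂ) • (1 : Matrix Bool Bool ℂ)) ⊗ₖ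
            proj (xor (bif xor a.1 a.2 then x.2 else x.1) a.2)) ⊗ₖ κ a)).trace = (p a : ℂ) := by
      intro a _
      rw [Matrix.trace_smul, Matrix.trace_kronecker, Matrix.trace_kronecker, hhalftr,
        proj_trace, (hκ a).2]
      simp [Complex.real_smul]
    rw [Finset.sum_congr rfl he]
    rw [← Complex.ofReal_sum, hpsum, Complex.ofReal_one]
  have hσtr : σ.trace = 2 := by
    rw [hσ, Matrix.trace_sum]
    have he : ∀ a ∈ Finset.univ, (p a •
        ((((1/2 : ℂ) • (1 : Matrix Bool Bool ℂ)) ⊗ₖ (1 : Matrix Bool Bool ℂ)) ⊗ₖ κ a)).trace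
        = (p a : ℂ) * 2 := by
      intro a _
      rw [Matrix.trace_smul, Matrix.trace_kronecker, Matrix.trace_kronecker, hhalftr,
        Matrix.trace_one, (hκ a).2]
      simp [Complex.real_smul]
    rw [Finset.sum_congr rfl he, ← Finset.sum_mul, ← Complex.ofReal_sum, hpsum]
    norm_num
  have hpair : ∀ x : Bool × Bool, ρf x + ρf (!x.1, !x.2) = σ := by
    intro x
    rw [hρf, hσ]
    simp only
    rw [← Finset.sum_add_distrib]
    refine Finset.sum_congr rfl fun a _ => ?_
    rw [← smul_add, ← Matrix.add_kronecker, ← Matrix.kronecker_add]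
    have hb : xor (bif xor a.1 a.2 then (!x.1, !x.2).2 else (!x.1, !x.2).1) a.2
        = !(xor (bif xor a.1 a.2 then x.2 else x.1) a.2) := by
      rcases x with ⟨x0, x1⟩
      rcases a with ⟨i, i'⟩
      cases x0 <;> cases x1 <;> cases i <;> cases i' <;> rfl
    rw [hb, proj_add_not]
  have hM1 : ∀ x, (1 - M x).PosSemidef := by
    intro x
    have he : 1 - M x = ∑ y ∈ Finset.univ.erase x, M y := by
      rw [← hMsum, ← Finset.add_sum_erase _ M (Finset.mem_univ x), add_sub_cancel_left]
    rw [he]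
    exact sum_posSemidef _ _ fun y _ => hM y
  have hstep : ∀ x : Bool × Bool, ((M x * ω x).trace).re ≤ ((M x * σ).trace).re + ε := by
    intro x
    have h1 := trace_mul_le_of_dist (hM x) (hM1 x) (hω x).1 (hρfpsd x)
      (by rw [(hω x).2, hρftr x])
    have h2 := hclose x
    have h3 : ((M x * ρf x).trace).re ≤ ((M x * σ).trace).re := by
      have h4 : M x * σ = M x * ρf x + M x * ρf (!x.1, !x.2) := by
        rw [← Matrix.mul_add, hpair x]
      have h5 : 0 ≤ ((M x * ρf (!x.1, !x.2)).trace).re :=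
        (Complex.le_def.mp (trace_mul_psd_nonneg (hM x) (hρfpsd _))).1
      rw [h4, Matrix.trace_add, Complex.add_re]
      linarith
    linarith
  have hsum : ∑ x : Bool × Bool, ((M x * σ).trace).re = 2 := by
    rw [← Complex.re_sum, ← Matrix.trace_sum, ← Finset.sum_mul, hMsum, Matrix.one_mul, hσtr]
    norm_num
  have hle : ∑ x : Bool × Bool, ((M x * ω x).trace).re
      ≤ ∑ x : Bool × Bool, (((M x * σ).trace).re + ε) :=
    Finset.sum_le_sum fun x _ => hstep x
  have hcard : (Finset.univ : Finset (Bool × Bool)).card = 4 := by decide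
  rw [Finset.sum_add_distrib, hsum, Finset.sum_const, hcard] at hle
  have : (1/4 : ℝ) * ∑ x : Bool × Bool, ((M x * ω x).trace).re
      ≤ (1/4 : ℝ) * (2 + 4 • ε) := by
    apply mul_le_mul_of_nonneg_left hle (by norm_num)
  calc (1/4 : ℝ) * ∑ x : Bool × Bool, ((M x * ω x).trace).re
      ≤ (1/4 : ℝ) * (2 + 4 • ε) := this
    _ = 1/2 + ε := by simp [nsmul_eq_mul]; ring
end
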